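/- Let A ⊆ ℝ^k be a measurable set of finite positive Lebesgue measure and let à ⊆ A be a measurable subset of positive measure. Let h₀, M, p₀, C, ε > 0 and let P : A × (0, h₀) → ℂ be such that a ↦ P(a, h) is measurable for each h and |P(a, h)| ≤ M for all (a, h). Assume: (i) for all a ∈ à and h ∈ (0, h₀), Re P(a, h) ≥ p₀ and |Im P(a, h)| ≤ C · h^{1/2 + ε}; (ii) sup_{a ∈ A ∖ Ã} |P(a, h)| → 0 as h → 0⁺. Define R(h) = ∫_A P(a, h) · exp(−(Im P(a, h))²/h) da. Then Im R(h) → 0 as h → 0⁺, and liminf_{h → 0⁺} Re R(h) ≥ p₀ · μ(Ã) > 0; in particular, for all sufficiently small h > 0, R(h) satisfies the real dominance conditions Re R(h) > 0 and Re R(h) >> Im R(h) (i.e. Im R(h)/Re R(h) → 0). -/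

import Mathlib

open Filter Topology MeasureTheory

/-- Real dominance conditions for the robustness function
`R(h) = ∫_A P(a,h)·exp(-(Im P(a,h))²/h) da`: if `P` satisfies the real dominance
conditions with `|Im P| ≤ C h^{1/2+ε}` on a robust region `Ã` of positive measure
and is uniformly suppressed on `A ∖ Ã`, then `Im R(h) → 0`,
`liminf Re R(h) ≥ p₀·μ(Ã) > 0`, and in particular `Re R(h) > 0` for small `h`
with `Im R(h)/Re R(h) → 0`. -/
theorem stmt_12 (k : ℕ) (A Atil : Set (Fin k → ℝ))
    (hA : MeasurableSet A) (hAfin : volume A < ⊤) (hApos : 0 < volume A)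
    (hAtil : MeasurableSet Atil) (hsub : Atil ⊆ A) (hAtilpos : 0 < volume Atil)
    (h₀ M p₀ C ε : ℝ) (hh₀ : 0 < h₀) (hM : 0 < M) (hp₀ : 0 < p₀)
    (hC : 0 < C) (hε : 0 < ε)
    (P : (Fin k → ℝ) → ℝ → ℂ)
    (hmeas : ∀ h ∈ Set.Ioo (0 : ℝ) h₀, Measurable (fun a => P a h))
    (hbdd : ∀ a ∈ A, ∀ h ∈ Set.Ioo (0 : ℝ) h₀, ‖P a h‖ ≤ M)
    (hdom : ∀ a ∈ Atil, ∀ h ∈ Set.Ioo (0 : ℝ) h₀,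
      p₀ ≤ (P a h).re ∧ |(P a h).im| ≤ C * h ^ ((1 : ℝ) / 2 + ε))
    (hsup : Tendsto (fun h : ℝ => ⨆ a : ↥(A \ Atil), ‖P (↑a) h‖)
      (𝓝[>] (0 : ℝ)) (𝓝 0))
    (R : ℝ → ℂ)
    (hR : ∀ h, R h = ∫ a in A, Real.exp (-((P a h).im) ^ 2 / h) • P a h) :
    Tendsto (fun h : ℝ => (R h).im) (𝓝[>] (0 : ℝ)) (𝓝 0) ∧
    0 < p₀ * (volume Atil).toReal ∧
    p₀ * (volume Atil).toReal ≤ liminf (fun h : ℝ => (R h).re) (𝓝[>] (0 : ℝ)) ∧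
    (∀ᶠ h in 𝓝[>] (0 : ℝ), 0 < (R h).re) ∧
    Tendsto (fun h : ℝ => (R h).im / (R h).re) (𝓝[>] (0 : ℝ)) (𝓝 0) := by
  set α : ℝ := (1 : ℝ) / 2 + ε with hα
  set μT : ℝ := (volume Atil).toReal with hμT
  set μD : ℝ := (volume (A \ Atil)).toReal with hμD
  set s : ℝ → ℝ := fun h => ⨆ a : ↥(A \ Atil), ‖P (↑a) h‖ with hs
  have hDmeas : MeasurableSet (A \ Atil) := hA.diff hAtil
  have hTfin : volume Atil < ⊤ := lt_of_le_of_lt (measure_mono hsub) hAfin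
  have hDfin : volume (A \ Atil) < ⊤ := lt_of_le_of_lt (measure_mono Set.diff_subset) hAfin
  have hμTpos : 0 < μT := ENNReal.toReal_pos hAtilpos.ne' hTfin.ne
  set b : ℝ → ℝ := fun h => C * h ^ α * μT + s h * μD with hb
  set g : ℝ → ℝ := fun h => p₀ * Real.exp (-(C ^ 2 * h ^ (2 * ε))) * μT - s h * μD with hg
  -- the pointwise key estimates
  have key : ∀ h ∈ Set.Ioo (0 : ℝ) h₀,
      |(R h).im| ≤ b h ∧ g h ≤ (R h).re ∧ (R h).re ≤ M * (volume A).toReal := by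
    intro h hh
    have hpos : 0 < h := hh.1
    have hmP := hmeas h hh
    set w : (Fin k → ℝ) → ℝ := fun a => Real.exp (-((P a h).im) ^ 2 / h) with hw
    have hw_pos : ∀ a, 0 < w a := fun a => Real.exp_pos _
    have hw_le1 : ∀ a, w a ≤ 1 := by
      intro a
      exact Real.exp_le_one_iff.2
        (div_nonpos_of_nonpos_of_nonneg (neg_nonpos.2 (sq_nonneg _)) hpos.le)
    have hnorm : ∀ a, ‖w a • P a h‖ = w a * ‖P a h‖ := by
      intro a
      rw [norm_smul, Real.norm_eq_abs, abs_of_pos (hw_pos a)]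
    have hmf : Measurable fun a => w a • P a h := by
      have h1 : Measurable w :=
        (Real.measurable_exp.comp
          (((Complex.measurable_im.comp hmP).pow_const 2).neg.div_const h))
      exact h1.smul hmP
    have hnormA : ∀ a ∈ A, ‖w a • P a h‖ ≤ M := by
      intro a ha
      rw [hnorm a]
      calc w a * ‖P a h‖ ≤ 1 * M :=
            mul_le_mul (hw_le1 a) (hbdd a ha h hh) (norm_nonneg _) zero_le_one
        _ = M := one_mul M
    have hInt : IntegrableOn (fun a => w a • P a h) A volume := by
      refine Measure.integrableOn_of_bounded (M := M) hAfin.ne hmf.aestronglyMeasurable ?_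
      filter_upwards [ae_restrict_mem hA] with a ha using hnormA a ha
    have hIT : IntegrableOn (fun a => w a • P a h) Atil volume := hInt.mono_set hsub
    have hID : IntegrableOn (fun a => w a • P a h) (A \ Atil) volume :=
      hInt.mono_set Set.diff_subset
    have hsplit : R h = (∫ a in Atil, w a • P a h) + ∫ a in A \ Atil, w a • P a h := by
      rw [hR h, ← setIntegral_union disjoint_sdiff_self_right hDmeas hIT hID,
        Set.union_diff_cancel hsub]
    have hbddD : BddAbove (Set.range fun a : ↥(A \ Atil) => ‖P (↑a) h‖) := by
      refine ⟨M, ?_⟩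
      rintro x ⟨a, rfl⟩
      exact hbdd (↑a) a.2.1 h hh
    have hs_le : ∀ a ∈ A \ Atil, ‖P a h‖ ≤ s h := by
      intro a ha
      exact le_ciSup hbddD (⟨a, ha⟩ : ↥(A \ Atil))
    have hnormD : ∀ a ∈ A \ Atil, ‖w a • P a h‖ ≤ s h := by
      intro a ha
      rw [hnorm a]
      calc w a * ‖P a h‖ ≤ 1 * s h :=
            mul_le_mul (hw_le1 a) (hs_le a ha) (norm_nonneg _) zero_le_one
        _ = s h := one_mul _
    have hDboundn : ‖∫ a in A \ Atil, w a • P a h‖ ≤ s h * μD :=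
      norm_setIntegral_le_of_norm_le_const hDfin hnormD
    refine ⟨?_, ?_, ?_⟩
    · -- imaginary part bound
      rw [hsplit, Complex.add_im]
      refine (abs_add_le _ _).trans (add_le_add ?_ ?_)
      · have h1 : ∫ a in Atil, (w a • P a h).im = (∫ a in Atil, w a • P a h).im := by
          simpa using integral_im hIT
        rw [← h1, ← Real.norm_eq_abs]
        refine norm_setIntegral_le_of_norm_le_const hTfin ?_
        intro x hx
        rw [Real.norm_eq_abs, Complex.smul_im, smul_eq_mul, abs_mul, abs_of_pos (hw_pos x)]
        calc w x * |(P x h).im| ≤ 1 * (C * h ^ α) :=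
              mul_le_mul (hw_le1 x) ((hdom x hx h hh).2) (abs_nonneg _) zero_le_one
          _ = C * h ^ α := one_mul _
      · refine (Complex.abs_im_le_norm _).trans ?_
        exact hDboundn
    · -- real part lower bound
      rw [hsplit, Complex.add_re]
      have hT : p₀ * Real.exp (-(C ^ 2 * h ^ (2 * ε))) * μT ≤
          (∫ a in Atil, w a • P a h).re := by
        have h1 : ∫ a in Atil, (w a • P a h).re = (∫ a in Atil, w a • P a h).re := by
          simpa using integral_re hIT
        rw [← h1]
        have h2 : p₀ * Real.exp (-(C ^ 2 * h ^ (2 * ε))) * μT =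
            (p₀ * Real.exp (-(C ^ 2 * h ^ (2 * ε)))) * (volume Atil).toReal := rfl
        rw [h2]
        refine setIntegral_ge_of_const_le_real hAtil hTfin.ne ?_
          (hIT.re)
        intro x hx
        rw [Complex.smul_re, smul_eq_mul]
        have hexp : Real.exp (-(C ^ 2 * h ^ (2 * ε))) ≤ w x := by
          apply Real.exp_le_exp.2
          rw [neg_div]
          rw [neg_le_neg_iff, div_le_iff₀ hpos]
          have hsq : (C * h ^ α) ^ 2 = C ^ 2 * h ^ (2 * ε) * h := by
            have h1 : (h ^ α) ^ 2 = h ^ (2 * ε) * h := by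
              rw [← Real.rpow_natCast (h ^ α) 2, ← Real.rpow_mul hpos.le,
                show α * ((2 : ℕ) : ℝ) = 2 * ε + 1 by rw [hα]; push_cast; ring,
                Real.rpow_add hpos, Real.rpow_one]
            rw [mul_pow, h1]; ring
          calc ((P x h).im) ^ 2 = |(P x h).im| ^ 2 := (sq_abs _).symm
            _ ≤ (C * h ^ α) ^ 2 :=
                pow_le_pow_left₀ (abs_nonneg _) ((hdom x hx h hh).2) 2
            _ = C ^ 2 * h ^ (2 * ε) * h := hsq
        calc p₀ * Real.exp (-(C ^ 2 * h ^ (2 * ε)))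
            = Real.exp (-(C ^ 2 * h ^ (2 * ε))) * p₀ := mul_comm _ _
          _ ≤ w x * (P x h).re :=
              mul_le_mul hexp (hdom x hx h hh).1 hp₀.le (hw_pos x).le
      have hD : -(s h * μD) ≤ (∫ a in A \ Atil, w a • P a h).re := by
        have habs : |(∫ a in A \ Atil, w a • P a h).re| ≤ s h * μD := by
          refine (Complex.abs_re_le_norm _).trans ?_
          exact hDboundn
        linarith [(abs_le.1 habs).1]
      rw [hg]
      dsimp only
      linarith
    · -- real part upper bound
      have h1 : ‖R h‖ ≤ M * (volume A).toReal := by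
        rw [hR h]
        exact norm_setIntegral_le_of_norm_le_const hAfin hnormA
      calc (R h).re ≤ |(R h).re| := le_abs_self _
        _ ≤ ‖R h‖ := Complex.abs_re_le_norm _
        _ ≤ M * (volume A).toReal := by exact h1
  have hev : ∀ᶠ h in 𝓝[>] (0 : ℝ), h ∈ Set.Ioo 0 h₀ :=
    Ioo_mem_nhdsGT_of_mem ⟨le_refl 0, hh₀⟩
  have hrpow : ∀ y : ℝ, 0 < y → Tendsto (fun h : ℝ => h ^ y) (𝓝[>] (0 : ℝ)) (𝓝 0) := by
    intro y hy
    have := (Real.continuousAt_rpow_const 0 y (Or.inr hy.le)).tendsto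
    simpa [Real.zero_rpow hy.ne'] using this.mono_left nhdsWithin_le_nhds
  have hb0 : Tendsto b (𝓝[>] (0 : ℝ)) (𝓝 0) := by
    have h1 : Tendsto (fun h : ℝ => C * h ^ α * μT) (𝓝[>] (0 : ℝ)) (𝓝 (C * 0 * μT)) :=
      (((hrpow α (by rw [hα]; positivity)).const_mul C).mul_const μT)
    have h2 : Tendsto (fun h : ℝ => s h * μD) (𝓝[>] (0 : ℝ)) (𝓝 (0 * μD)) :=
      hsup.mul_const μD
    simpa using h1.add h2
  have hgl : Tendsto g (𝓝[>] (0 : ℝ)) (𝓝 (p₀ * μT)) := by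
    have hE : Tendsto (fun h : ℝ => Real.exp (-(C ^ 2 * h ^ (2 * ε)))) (𝓝[>] (0 : ℝ))
        (𝓝 1) := by
      have h1 : Tendsto (fun h : ℝ => -(C ^ 2 * h ^ (2 * ε))) (𝓝[>] (0 : ℝ)) (𝓝 0) := by
        have := ((hrpow (2 * ε) (by positivity)).const_mul (C ^ 2)).neg
        simpa using this
      have := (Real.continuous_exp.tendsto 0).comp h1
      rw [Real.exp_zero] at this; exact this
    have h2 : Tendsto (fun h : ℝ => s h * μD) (𝓝[>] (0 : ℝ)) (𝓝 (0 * μD)) :=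
      hsup.mul_const μD
    have h3 : Tendsto (fun h : ℝ => p₀ * Real.exp (-(C ^ 2 * h ^ (2 * ε))) * μT)
        (𝓝[>] (0 : ℝ)) (𝓝 (p₀ * 1 * μT)) := ((hE.const_mul p₀).mul_const μT)
    simpa using h3.sub h2
  have hppos : 0 < p₀ * μT := mul_pos hp₀ hμTpos
  have hIm : Tendsto (fun h : ℝ => (R h).im) (𝓝[>] (0 : ℝ)) (𝓝 0) := by
    rw [tendsto_zero_iff_abs_tendsto_zero]
    refine squeeze_zero' (Eventually.of_forall fun h => abs_nonneg _) ?_ hb0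
    filter_upwards [hev] with h hh using (key h hh).1
  -- eventual lower bound on the real part
  have hglow : ∀ᶠ h in 𝓝[>] (0 : ℝ), p₀ * μT / 2 < g h :=
    hgl.eventually_const_lt (half_lt_self hppos)
  have hRelow : ∀ᶠ h in 𝓝[>] (0 : ℝ), p₀ * μT / 2 < (R h).re := by
    filter_upwards [hglow, hev] with h h1 h2 using lt_of_lt_of_le h1 (key h h2).2.1
  have hliminf : p₀ * μT ≤ liminf (fun h : ℝ => (R h).re) (𝓝[>] (0 : ℝ)) := by
    have hle : liminf g (𝓝[>] (0 : ℝ)) ≤ liminf (fun h : ℝ => (R h).re) (𝓝[>] (0 : ℝ)) := by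
      refine liminf_le_liminf ?_ ?_ ?_
      · filter_upwards [hev] with h hh using (key h hh).2.1
      · exact ⟨p₀ * μT / 2, eventually_map.2 (hglow.mono fun h hh => hh.le)⟩
      · refine isCoboundedUnder_ge_of_eventually_le (x := M * (volume A).toReal) _ ?_
        filter_upwards [hev] with h hh using (key h hh).2.2
    rwa [hgl.liminf_eq] at hle
  have hRepos : ∀ᶠ h in 𝓝[>] (0 : ℝ), 0 < (R h).re :=
    hRelow.mono fun h hh => lt_trans (half_pos hppos) hh
  refine ⟨hIm, hppos, hliminf, hRepos, ?_⟩
  rw [tendsto_zero_iff_abs_tendsto_zero]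
  refine squeeze_zero' (Eventually.of_forall fun h => abs_nonneg _)
    ?_ (by simpa using hb0.div_const (p₀ * μT / 2))
  filter_upwards [hev, hRelow] with h hh hre
  show |(R h).im / (R h).re| ≤ b h / (p₀ * μT / 2)
  rw [abs_div]
  have hbnn : 0 ≤ b h := le_trans (abs_nonneg _) (key h hh).1
  rw [abs_of_pos (lt_trans (half_pos hppos) hre)]
  exact div_le_div₀ hbnn (key h hh).1 (half_pos hppos) hre.le
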